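/- Let M = (E, →, ◁, loc, λ) be an MSC over P and Σ, let π be a path expression, and let e, f ∈ E with e →* f. If last_π(e) ≠ ⊥ and last_π(f) ≠ ⊥, then last_π(e) ≤ last_π(f). -/

import Mathlib

namespace Gossip

/-- Events extended with bottom and top elements. -/
inductive ExtEv (E : Type) : Type where
  | bot : ExtEv E
  | evt (e : E) : ExtEv E
  | top : ExtEv E

/-- A message sequence chart (MSC) over processes `P`, alphabet `A`,
with (finite, nonempty) set of events `E`. -/
structure MSC (P A E : Type) : Type where
  fintypeE : Fintype E
  nonemptyE : Nonempty E
  loc : E → P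
  lab : E → A
  /-- process successor relation `→` -/
  next : E → E → Prop
  /-- message relation `◁` -/
  msg : E → E → Prop
  next_loc : ∀ {e f : E}, next e f → loc e = loc f
  next_irrefl : ∀ e : E, ¬ next e e
  next_right_unique : ∀ {e f f' : E}, next e f → next e f' → f = f'
  next_left_unique : ∀ {e e' f : E}, next e f → next e' f → e = e'
  next_total : ∀ e f : E, loc e = loc f →
      Relation.ReflTransGen next e f ∨ Relation.ReflTransGen next f e
  msg_loc : ∀ {e f : E}, msg e f → loc e ≠ loc f
  /-- every event belongs to at most one pair of `◁` -/
  msg_unique : ∀ {e f e' f' : E}, msg e f → msg e' f' →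
      (e = e' ∨ e = f' ∨ f = e' ∨ f = f') → e = e' ∧ f = f'
  fifo : ∀ {e f e' f' : E}, msg e f → msg e' f' → loc e = loc e' → loc f = loc f' →
      (Relation.ReflTransGen next e e' ↔ Relation.ReflTransGen next f f')
  /-- `≤ = (→ ∪ ◁)*` is a partial order -/
  causal_antisymm : ∀ {e f : E},
      Relation.ReflTransGen (fun x y => next x y ∨ msg x y) e f →
      Relation.ReflTransGen (fun x y => next x y ∨ msg x y) f e → e = f

namespace MSC

variable {P A E B : Type}

/-- the causal order `≤ = (→ ∪ ◁)*` -/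
def le (M : MSC P A E) : E → E → Prop :=
  Relation.ReflTransGen (fun x y => M.next x y ∨ M.msg x y)

/-- the strict causal order `<` -/
def lt (M : MSC P A E) (e f : E) : Prop := M.le e f ∧ e ≠ f

/-- `→*` -/
def nextStar (M : MSC P A E) : E → E → Prop := Relation.ReflTransGen M.next

/-- the causal order extended to `E ∪ {⊥,⊤}` with `⊥ < e < ⊤` -/
def extLe (M : MSC P A E) : ExtEv E → ExtEv E → Prop
  | .bot, _ => True
  | _, .top => True
  | .evt e, .evt f => M.le e f
  | _, _ => False

def extLt (M : MSC P A E) (x y : ExtEv E) : Prop := M.extLe x y ∧ x ≠ y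

/-- replace the labelling of an MSC (e.g. to pair it with an extra labelling) -/
def relabel (M : MSC P A E) (μ : E → B) : MSC P B E where
  fintypeE := M.fintypeE
  nonemptyE := M.nonemptyE
  loc := M.loc
  lab := μ
  next := M.next
  msg := M.msg
  next_loc := M.next_loc
  next_irrefl := M.next_irrefl
  next_right_unique := M.next_right_unique
  next_left_unique := M.next_left_unique
  next_total := M.next_total
  msg_loc := M.msg_loc
  msg_unique := M.msg_unique
  fifo := M.fifo
  causal_antisymm := M.causal_antisymm

end MSC

/-- letters of path expressions: `→`, `→*`, `p▷q`, `⟨a⟩` -/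
inductive PathLetter (P A : Type) : Type where
  | next : PathLetter P A
  | nextStar : PathLetter P A
  | msg (p q : P) : PathLetter P A
  | lab (a : A) : PathLetter P A

/-- path expressions: finite words over `Γ` -/
abbrev PathExpr (P A : Type) := List (PathLetter P A)

variable {P A E : Type}

def letterSem (M : MSC P A E) : PathLetter P A → E → E → Prop
  | .next => M.next
  | .nextStar => M.nextStar
  | .msg p q => fun e f => M.loc e = p ∧ M.loc f = q ∧ M.msg e f
  | .lab a => fun e f => e = f ∧ M.lab e = a

/-- `⟦π⟧` -/
def pathSem (M : MSC P A E) : PathExpr P A → E → E → Prop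
  | [] => fun e f => e = f
  | l :: π => fun e g => ∃ f, letterSem M l e f ∧ pathSem M π f g

def letterComp : PathLetter P A → P → P → Prop
  | .msg p q => fun x y => x = p ∧ y = q
  | _ => fun x y => x = y

/-- `Comp(π)`; `π ∈ Π_{p,q}` iff `pcomp π p q` -/
def pcomp : PathExpr P A → P → P → Prop
  | [] => fun x y => x = y
  | l :: π => fun x z => ∃ y, letterComp l x y ∧ pcomp π y z

/-- `IsLast M π e x` holds iff `x = last_π(e)` (with `x = ⊥` iff no `π`-path into `e`). -/
def IsLast (M : MSC P A E) (π : PathExpr P A) (e : E) : ExtEv E → Prop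
  | .bot => ∀ f, ¬ pathSem M π f e
  | .evt g => pathSem M π g e ∧ ∀ f, pathSem M π f e → M.le f g
  | .top => False

/-- `IsFirst M π e x` holds iff `x = first_π(e)` (with `x = ⊤` iff no `π`-path out of `e`). -/
def IsFirst (M : MSC P A E) (π : PathExpr P A) (e : E) : ExtEv E → Prop
  | .top => ∀ f, ¬ pathSem M π e f
  | .evt g => pathSem M π e g ∧ ∀ f, pathSem M π e f → M.le g f
  | .bot => False

/-- `IsFa M π π' e x` holds iff `x = f_{π,π'}(e) = first_{π'}(last_π(e))`, with
`first_{π'}(⊥) := ⊥`. -/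
def IsFa (M : MSC P A E) (π π' : PathExpr P A) (e : E) (x : ExtEv E) : Prop :=
  (IsLast M π e ExtEv.bot ∧ x = ExtEv.bot) ∨
    ∃ g, IsLast M π e (ExtEv.evt g) ∧ IsFirst M π' g x

/-- `IsLastProc M p e x` holds iff `x = last_p(e)`, the maximal event of process `p`
strictly below `e` (`⊥` if none). -/
def IsLastProc (M : MSC P A E) (p : P) (e : E) : ExtEv E → Prop
  | .bot => ∀ f, M.loc f = p → ¬ M.lt f e
  | .evt g => M.loc g = p ∧ M.lt g e ∧ ∀ f, M.loc f = p → M.lt f e → M.le f g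
  | .top => False

/-- `π ≼_e π'`, i.e. `last_π(e) ≤ last_{π'}(e)` -/
def ple (M : MSC P A E) (π π' : PathExpr P A) (e : E) : Prop :=
  ∃ x y, IsLast M π e x ∧ IsLast M π' e y ∧ M.extLe x y

def gossipSuffix : P → List P → PathExpr P A
  | _, [] => []
  | p, q :: w => PathLetter.msg p q :: PathLetter.nextStar :: gossipSuffix q w

/-- `π_w` for `w = p :: rest` -/
def gossipExpr (p : P) (w : List P) : PathExpr P A :=
  match w with
  | [] => [PathLetter.next, PathLetter.nextStar]
  | _ :: _ => PathLetter.nextStar :: gossipSuffix p w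

/-- `π ∈ Π^gossip` -/
def IsGossip (π : PathExpr P A) : Prop :=
  ∃ (p : P) (w : List P), (p :: w).Nodup ∧ π = gossipExpr p w

/-- actions of a CFM transition -/
inductive CAct (P A Msg : Type) : Type where
  | internal (a : A) : CAct P A Msg
  | send (a : A) (m : Msg) (q : P) : CAct P A Msg
  | recv (a : A) (m : Msg) (q : P) : CAct P A Msg

def CAct.labelOf {P A Msg : Type} : CAct P A Msg → A
  | .internal a => a
  | .send a _ _ => a
  | .recv a _ _ => a

/-- a communicating finite-state machine over `P` and `A` -/
structure CFM (P A : Type) : Type 1 where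
  Msg : Type
  msgFin : Fintype Msg
  S : Type
  sFin : Fintype S
  ι : P → S
  Δ : P → Set (S × CAct P A Msg × S)
  Acc : Set (P → S)
  wf_send : ∀ p s a m q s', (s, CAct.send a m q, s') ∈ Δ p → q ≠ p
  wf_recv : ∀ p s a m q s', (s, CAct.recv a m q, s') ∈ Δ p → q ≠ p

namespace CFM

variable {P A E : Type}

/-- `ρ` is a run of the CFM `C` on the MSC `M` -/
def IsRun (C : CFM P A) (M : MSC P A E) (ρ : E → C.S × CAct P A C.Msg × C.S) : Prop :=
  (∀ e, ρ e ∈ C.Δ (M.loc e)) ∧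
  (∀ e, ((ρ e).2.1).labelOf = M.lab e) ∧
  (∀ e, (¬ ∃ f, M.next f e) → (ρ e).1 = C.ι (M.loc e)) ∧
  (∀ e f, M.next e f → (ρ e).2.2 = (ρ f).1) ∧
  (∀ e, (¬ ∃ f, M.msg e f) → (¬ ∃ f, M.msg f e) → ∃ a, (ρ e).2.1 = CAct.internal a) ∧
  (∀ e f, M.msg e f → ∃ m, (ρ e).2.1 = CAct.send (M.lab e) m (M.loc f) ∧
      (ρ f).2.1 = CAct.recv (M.lab f) m (M.loc e))

/-- the run `ρ` is accepting -/
def IsAccepting (C : CFM P A) (M : MSC P A E)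
    (ρ : E → C.S × CAct P A C.Msg × C.S) : Prop :=
  ∃ s : P → C.S, s ∈ C.Acc ∧ ∀ p,
    ((∃ e, M.loc e = p) → ∃ e, M.loc e = p ∧ (¬ ∃ f, M.next e f) ∧ s p = (ρ e).2.2) ∧
    ((¬ ∃ e, M.loc e = p) → s p = C.ι p)

/-- `M ∈ L(C)` -/
def Accepts (C : CFM P A) (M : MSC P A E) : Prop :=
  ∃ ρ, C.IsRun M ρ ∧ C.IsAccepting M ρ

/-- deterministic CFMs -/
def Deterministic (C : CFM P A) : Prop :=
  ∀ p s γ₁ s₁ γ₂ s₂, (s, γ₁, s₁) ∈ C.Δ p → (s, γ₂, s₂) ∈ C.Δ p →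
    CAct.labelOf γ₁ = CAct.labelOf γ₂ →
    ((∀ a₁ a₂, γ₁ = CAct.internal a₁ → γ₂ = CAct.internal a₂ → s₁ = s₂) ∧
     (∀ a₁ m₁ a₂ m₂ q, γ₁ = CAct.send a₁ m₁ q → γ₂ = CAct.send a₂ m₂ q →
        s₁ = s₂ ∧ m₁ = m₂) ∧
     (∀ a₁ a₂ m q, γ₁ = CAct.recv a₁ m q → γ₂ = CAct.recv a₂ m q → s₁ = s₂))

end CFM

/-- acceptance of the extended MSC `(M, ξ)` by a CFM over a product alphabet -/
def AcceptsExt {P A E Ξ : Type} (C : CFM P (A × Ξ)) (M : MSC P A E) (ξ : E → Ξ) : Prop :=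
  C.Accepts (M.relabel fun e => (M.lab e, ξ e))

/-- apply `μ` to an extended event, sending both `⊥` and `⊤` to `none` -/
def extToOptMap {E Θ : Type} (μ : E → Θ) : ExtEv E → Option Θ
  | .evt g => some (μ g)
  | _ => none

/-- apply `μ` to an extended event, preserving `⊥` and `⊤` -/
def extMap {E Θ : Type} (μ : E → Θ) : ExtEv E → ExtEv Θ
  | .bot => ExtEv.bot
  | .evt g => ExtEv.evt (μ g)
  | .top => ExtEv.top

/-- formulas of the temporal logic TL -/
inductive TL (P A : Type) : Type where
  | lab (a : A) : TL P A
  | proc (p : P) : TL P A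
  | disj (φ ψ : TL P A) : TL P A
  | neg (φ : TL P A) : TL P A
  | co (φ : TL P A) : TL P A
  | tuntil (φ ψ : TL P A) : TL P A
  | tsince (φ ψ : TL P A) : TL P A

/-- `M, e ⊨ φ` -/
def TLsat (M : MSC P A E) : TL P A → E → Prop
  | .lab a, e => M.lab e = a
  | .proc p, e => M.loc e = p
  | .disj φ ψ, e => TLsat M φ e ∨ TLsat M ψ e
  | .neg φ, e => ¬ TLsat M φ e
  | .co φ, e => ∃ f, ¬ M.le e f ∧ ¬ M.le f e ∧ TLsat M φ f
  | .tuntil φ ψ, e => ∃ f, M.lt e f ∧ TLsat M ψ f ∧ ∀ g, M.lt e g → M.lt g f → TLsat M φ g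
  | .tsince φ ψ, e => ∃ f, M.lt f e ∧ TLsat M ψ f ∧ ∀ g, M.lt f g → M.lt g e → TLsat M φ g

lemma loc_eq_of_nextStar (M : MSC P A E) {e f : E}
    (h : Relation.ReflTransGen M.next e f) : M.loc e = M.loc f := by
  induction h with
  | refl => rfl
  | tail _ hn ih => exact ih.trans (M.next_loc hn)

lemma nextStar_le (M : MSC P A E) {e f : E}
    (h : Relation.ReflTransGen M.next e f) : M.le e f :=
  Relation.ReflTransGen.mono (fun _ _ hn => Or.inl hn) e f h

lemma pathSem_snoc (M : MSC P A E) (π : PathExpr P A) (l : PathLetter P A)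
    (g e : E) :
    pathSem M (π ++ [l]) g e ↔ ∃ m, pathSem M π g m ∧ letterSem M l m e := by
  induction π generalizing g with
  | nil =>
    simp only [List.nil_append, pathSem]
    constructor
    · rintro ⟨m, hm, rfl⟩; exact ⟨g, rfl, hm⟩
    · rintro ⟨m, rfl, hm⟩; exact ⟨e, hm, rfl⟩
  | cons l' π' ih =>
    simp only [List.cons_append, pathSem]
    constructor
    · rintro ⟨m, hm, hrest⟩
      obtain ⟨m', h1, h2⟩ := (ih m).1 hrest
      exact ⟨m', ⟨m, hm, h1⟩, h2⟩
    · rintro ⟨m', ⟨m, hm, h1⟩, h2⟩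
      exact ⟨m, hm, (ih m).2 ⟨m', h1, h2⟩⟩

lemma last_mono_key (M : MSC P A E) (π : PathExpr P A) :
    ∀ (e f g h : E),
      Relation.ReflTransGen M.next e f →
      pathSem M π g e → (∀ g', pathSem M π g' e → M.le g' g) →
      pathSem M π h f → (∀ h', pathSem M π h' f → M.le h' h) →
      M.le g h := by
  induction π using List.reverseRecOn with
  | nil =>
    intro e f g h hef hg _ hh _
    have hg' : g = e := hg
    have hh' : h = f := hh
    subst hg'; subst hh'
    exact nextStar_le M hef
  | append_singleton π' l ih =>
    intro e f g h hef hg hgmax hh hhmax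
    rw [pathSem_snoc] at hg hh
    obtain ⟨m, hgm, hl⟩ := hg
    obtain ⟨m', hhm, hl'⟩ := hh
    cases l with
    | next =>
      have hl : M.next m e := hl
      have hl' : M.next m' f := hl'
      have hmm' : Relation.ReflTransGen M.next m m' := by
        rcases Relation.ReflTransGen.cases_tail hef with heq | ⟨c, hec, hcf⟩
        · subst heq
          rw [M.next_left_unique hl hl']
        · have : c = m' := M.next_left_unique hcf hl'
          subst this
          exact Relation.ReflTransGen.head hl hec
      refine ih m m' g h hmm' hgm ?_ hhm ?_
      · intro g' hg'
        exact hgmax g' ((pathSem_snoc M π' _ g' e).2 ⟨m, hg', hl⟩)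
      · intro h' hh'
        exact hhmax h' ((pathSem_snoc M π' _ h' f).2 ⟨m', hh', hl'⟩)
    | nextStar =>
      have hl : M.nextStar m e := hl
      have : pathSem M (π' ++ [PathLetter.nextStar]) g f :=
        (pathSem_snoc M π' _ g f).2 ⟨m, hgm, Relation.ReflTransGen.trans hl hef⟩
      exact hhmax g this
    | msg p q =>
      obtain ⟨hmp, heq, hme⟩ := hl
      obtain ⟨hmp', heq', hme'⟩ := hl'
      have hmm' : Relation.ReflTransGen M.next m m' :=
        (M.fifo hme hme' (hmp.trans hmp'.symm)
          (loc_eq_of_nextStar M hef)).mpr hef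
      refine ih m m' g h hmm' hgm ?_ hhm ?_
      · intro g' hg'
        exact hgmax g' ((pathSem_snoc M π' _ g' e).2 ⟨m, hg', hmp, heq, hme⟩)
      · intro h' hh'
        exact hhmax h' ((pathSem_snoc M π' _ h' f).2 ⟨m', hh', hmp', heq', hme'⟩)
    | lab a =>
      obtain ⟨rfl, hlab⟩ : m = e ∧ M.lab m = a := hl
      obtain ⟨rfl, hlab'⟩ : m' = f ∧ M.lab m' = a := hl'
      refine ih m m' g h hef hgm ?_ hhm ?_
      · intro g' hg'
        exact hgmax g' ((pathSem_snoc M π' _ g' m).2 ⟨m, hg', rfl, hlab⟩)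
      · intro h' hh'
        exact hhmax h' ((pathSem_snoc M π' _ h' m').2 ⟨m', hh', rfl, hlab'⟩)

end Gossip
open Gossip in
/-- Lemma 1.1: monotonicity of `last_π`:
if `e →* f` and `last_π(e) ≠ ⊥ ≠ last_π(f)`, then `last_π(e) ≤ last_π(f)`. -/
theorem stmt0 {P A E : Type} [Fintype P] [Fintype A] (M : MSC P A E)
    (π : PathExpr P A) (e f : E)
    (hef : Relation.ReflTransGen M.next e f)
    (x y : ExtEv E) (hx : IsLast M π e x) (hy : IsLast M π f y)
    (hxb : x ≠ ExtEv.bot) (hyb : y ≠ ExtEv.bot) :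
    M.extLe x y := by
  cases x with
  | bot => exact absurd rfl hxb
  | top => exact absurd hx (by simp [IsLast])
  | evt g =>
    cases y with
    | bot => exact absurd rfl hyb
    | top => exact absurd hy (by simp [IsLast])
    | evt h =>
      obtain ⟨hg, hgmax⟩ := hx
      obtain ⟨hh, hhmax⟩ := hy
      exact last_mono_key M π e f g h hef hg hgmax hh hhmax
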